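/- A real symmetric d-tensor A = (a_{i₁⋯i_d}) of dimension n is symmetrically odeco — i.e. there exists a real orthogonal matrix O ∈ O(n,ℝ) such that the d-congruence AO^d is a diagonal tensor, equivalently A = Σ_{i=1}^n λᵢ vᵢ^{⊗d} for real scalars λᵢ and an orthonormal basis v₁,…,vₙ of ℝⁿ — if and only if the slice matrices A^{(i₃⋯i_d)} pairwise commute. -/

import Mathlib

open Matrix

private lemma sum_pi_split {n m : ℕ} (f : (Fin (m+1) → Fin n) → ℝ) :
    ∑ idx : Fin (m+1) → Fin n, f idx = ∑ i : Fin n, ∑ c : Fin m → Fin n, f (Fin.cons i c) := by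
  rw [← Equiv.sum_comp (Fin.consEquiv fun _ => Fin n) f, Fintype.sum_prod_type]
  rfl

private lemma exists_perm {m : ℕ} {s s' : Fin (m+2)} (h : s ≠ s') :
    ∃ σ : Equiv.Perm (Fin (m+2)), σ 0 = s ∧ σ 1 = s' := by
  classical
  set σ₁ := Equiv.swap (0 : Fin (m+2)) s with hσ₁
  have h0 : σ₁ 0 = s := Equiv.swap_apply_left 0 s
  set s'' := σ₁.symm s' with hs''
  have hne : s'' ≠ 0 := by
    intro hh
    apply h
    have : s' = σ₁ 0 := by rw [← hh, hs'', Equiv.apply_symm_apply]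
    rw [this, h0]
  refine ⟨σ₁ * Equiv.swap 1 s'', ?_, ?_⟩
  · simp only [Equiv.Perm.mul_apply]
    rw [Equiv.swap_apply_of_ne_of_ne Fin.zero_ne_one (Ne.symm hne), h0]
  · simp only [Equiv.Perm.mul_apply]
    rw [Equiv.swap_apply_left, hs'', Equiv.apply_symm_apply]

private lemma swap01_cons {n m : ℕ} (i j : Fin n) (c : Fin m → Fin n) :
    (Fin.cons i (Fin.cons j c) : Fin (m+2) → Fin n) ∘ (Equiv.swap 0 1) =
      Fin.cons j (Fin.cons i c) := by
  funext t
  refine Fin.cases ?_ (fun s => ?_) t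
  · show (Fin.cons i (Fin.cons j c) : Fin (m+2) → Fin n) (Equiv.swap 0 1 0) = j
    rw [Equiv.swap_apply_left, ← Fin.succ_zero_eq_one, Fin.cons_succ, Fin.cons_zero]
  · refine Fin.cases ?_ (fun s' => ?_) s
    · simp [Fin.succ_zero_eq_one, Equiv.swap_apply_right]
    · have h1 : (s'.succ.succ : Fin (m+2)) ≠ 0 := Fin.succ_ne_zero _
      have h2 : (s'.succ.succ : Fin (m+2)) ≠ 1 := by
        rw [← Fin.succ_zero_eq_one]
        exact fun hh => Fin.succ_ne_zero s' (Fin.succ_injective _ hh)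
      simp [Function.comp, Equiv.swap_apply_of_ne_of_ne h1 h2]

-- decomposition lemma for forward direction
private lemma decomp {n e : ℕ}
    (A : (Fin (e + 2) → Fin n) → ℝ)
    (O : Matrix (Fin n) (Fin n) ℝ) (hO : Oᵀ * O = 1)
    (hdiag : ∀ jdx : Fin (e + 2) → Fin n, (¬ ∀ s s' : Fin (e + 2), jdx s = jdx s') →
          (∑ idx : Fin (e + 2) → Fin n, A idx * ∏ t, O (idx t) (jdx t)) = 0)
    (idx : Fin (e+2) → Fin n) :
    A idx = ∑ k : Fin n,
      (∑ idx' : Fin (e+2) → Fin n, A idx' * ∏ t, O (idx' t) k) * ∏ t, O (idx t) k := by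
  classical
  have hOOT : O * Oᵀ = 1 := mul_eq_one_comm.mp hO
  set B : (Fin (e+2) → Fin n) → ℝ :=
    fun jdx => ∑ idx' : Fin (e+2) → Fin n, A idx' * ∏ t, O (idx' t) (jdx t) with hB
  -- inversion
  have h1 : ∑ jdx : Fin (e+2) → Fin n, B jdx * ∏ t, O (idx t) (jdx t) = A idx := by
    calc ∑ jdx : Fin (e+2) → Fin n, B jdx * ∏ t, O (idx t) (jdx t)
        = ∑ jdx : Fin (e+2) → Fin n, ∑ idx' : Fin (e+2) → Fin n,
            A idx' * ∏ t, (O (idx' t) (jdx t) * O (idx t) (jdx t)) := by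
          simp only [hB, Finset.sum_mul, Finset.prod_mul_distrib, mul_assoc]
      _ = ∑ idx' : Fin (e+2) → Fin n,
            A idx' * ∑ jdx : Fin (e+2) → Fin n, ∏ t, (O (idx' t) (jdx t) * O (idx t) (jdx t)) := by
          rw [Finset.sum_comm]
          simp only [Finset.mul_sum]
      _ = ∑ idx' : Fin (e+2) → Fin n, A idx' * ∏ t, (O * Oᵀ) (idx' t) (idx t) := by
          refine Finset.sum_congr rfl fun idx' _ => ?_
          rw [← Fintype.prod_sum fun t j => O (idx' t) j * O (idx t) j]
          refine congrArg _ (Finset.prod_congr rfl fun t _ => ?_)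
          rw [mul_apply]
          refine Finset.sum_congr rfl fun j _ => ?_
          rw [transpose_apply]
      _ = ∑ idx' : Fin (e+2) → Fin n, A idx' * if idx' = idx then 1 else 0 := by
          refine Finset.sum_congr rfl fun idx' _ => ?_
          rw [hOOT]
          congr 1
          simp only [one_apply]
          by_cases h : idx' = idx
          · simp [h]
          · rw [if_neg h]
            obtain ⟨t, ht⟩ := Function.ne_iff.mp h
            exact Finset.prod_eq_zero (Finset.mem_univ t) (if_neg ht)
      _ = A idx := by simp
  -- restrict to constant jdx
  rw [← h1]
  have h2 : ∀ jdx : Fin (e+2) → Fin n,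
      B jdx * ∏ t, O (idx t) (jdx t)
        = ∑ k : Fin n, if jdx = (fun _ => k) then B jdx * ∏ t, O (idx t) (jdx t) else 0 := by
    intro jdx
    by_cases hconst : ∀ s s' : Fin (e+2), jdx s = jdx s'
    · have hrep : ∀ k : Fin n, (jdx = fun _ => k) ↔ k = jdx 0 := by
        intro k
        constructor
        · intro hh; rw [hh]
        · intro hh; funext s; rw [hh]; exact hconst s 0
      calc B jdx * ∏ t, O (idx t) (jdx t)
          = ∑ k : Fin n, if k = jdx 0 then B jdx * ∏ t, O (idx t) (jdx t) else 0 := by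
            rw [Finset.sum_ite_eq' Finset.univ (jdx 0) fun _ => B jdx * ∏ t, O (idx t) (jdx t)]
            simp
        _ = _ := by
            refine Finset.sum_congr rfl fun k _ => ?_
            exact (if_congr (hrep k) rfl rfl).symm
    · have hz : B jdx = 0 := hdiag jdx hconst
      rw [hz, zero_mul]
      symm
      refine Finset.sum_eq_zero fun k _ => ?_
      rw [if_neg]
      intro hh
      exact hconst fun s s' => by rw [hh]
  calc ∑ jdx : Fin (e+2) → Fin n, B jdx * ∏ t, O (idx t) (jdx t)
      = ∑ jdx : Fin (e+2) → Fin n, ∑ k : Fin n,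
          if jdx = (fun _ => k) then B jdx * ∏ t, O (idx t) (jdx t) else 0 :=
        Finset.sum_congr rfl fun jdx _ => h2 jdx
    _ = ∑ k : Fin n, ∑ jdx : Fin (e+2) → Fin n,
          if jdx = (fun _ => k) then B jdx * ∏ t, O (idx t) (jdx t) else 0 := Finset.sum_comm
    _ = ∑ k : Fin n, B (fun _ => k) * ∏ t, O (idx t) k := by
        refine Finset.sum_congr rfl fun k _ => ?_
        rw [Finset.sum_ite_eq' Finset.univ (fun _ => k)
          (fun jdx => B jdx * ∏ t, O (idx t) (jdx t))]
        simp

theorem stmt_18 {n e : ℕ} (he : 1 ≤ e)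
    (A : (Fin (e + 2) → Fin n) → ℝ)
    (hA : ∀ (σ : Equiv.Perm (Fin (e + 2))) (idx : Fin (e + 2) → Fin n), A (idx ∘ σ) = A idx) :
    (∃ O : Matrix (Fin n) (Fin n) ℝ, Oᵀ * O = 1 ∧
        ∀ jdx : Fin (e + 2) → Fin n, (¬ ∀ s s' : Fin (e + 2), jdx s = jdx s') →
          (∑ idx : Fin (e + 2) → Fin n, A idx * ∏ t, O (idx t) (jdx t)) = 0)
      ↔ (∀ c c' : Fin e → Fin n,
          Matrix.of (fun i j => A (Fin.cons i (Fin.cons j c)))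
              * Matrix.of (fun i j => A (Fin.cons i (Fin.cons j c')))
            = Matrix.of (fun i j => A (Fin.cons i (Fin.cons j c')))
              * Matrix.of (fun i j => A (Fin.cons i (Fin.cons j c)))) := by
  constructor
  · rintro ⟨O, hO, hdiag⟩ c c'
    set lam : Fin n → ℝ := fun k => ∑ idx' : Fin (e+2) → Fin n, A idx' * ∏ t, O (idx' t) k
      with hlam
    have hslice : ∀ b : Fin e → Fin n,
        Matrix.of (fun i j => A (Fin.cons i (Fin.cons j b)))
          = O * diagonal (fun k => lam k * ∏ t, O (b t) k) * Oᵀ := by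
      intro b
      ext i j
      rw [of_apply, decomp A O hO hdiag]
      simp only [mul_apply, diagonal_apply, transpose_apply, mul_ite, mul_zero,
        Finset.sum_ite_eq', Finset.mem_univ, if_true]
      refine Finset.sum_congr rfl fun k _ => ?_
      rw [Fin.prod_univ_succ, Fin.prod_univ_succ]
      simp only [Fin.cons_zero, Fin.cons_succ]
      ring
    rw [hslice c, hslice c']
    have key : ∀ d d' : Fin n → ℝ,
        (O * diagonal d * Oᵀ) * (O * diagonal d' * Oᵀ)
          = O * diagonal (fun k => d k * d' k) * Oᵀ := by
      intro d d'
      calc (O * diagonal d * Oᵀ) * (O * diagonal d' * Oᵀ)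
          = O * diagonal d * (Oᵀ * O) * (diagonal d' * Oᵀ) := by
            simp only [Matrix.mul_assoc]
        _ = O * (diagonal d * diagonal d') * Oᵀ := by
            rw [hO, Matrix.mul_one]
            simp only [Matrix.mul_assoc]
        _ = _ := by rw [diagonal_mul_diagonal]
    rw [key, key]
    have heq : (fun k => (lam k * ∏ t, O (c t) k) * (lam k * ∏ t, O (c' t) k))
        = (fun k => (lam k * ∏ t, O (c' t) k) * (lam k * ∏ t, O (c t) k)) := by
      funext k; ring
    rw [heq]
  · intro hcomm
    classical
    set M : (Fin e → Fin n) → Matrix (Fin n) (Fin n) ℝ :=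
      fun c => Matrix.of (fun i j => A (Fin.cons i (Fin.cons j c))) with hM
    have hsym : ∀ c, (M c).IsHermitian := by
      intro c
      ext i j
      simp only [conjTranspose_apply, star_trivial, hM, of_apply]
      exact (swap01_cons i j c ▸ hA (Equiv.swap 0 1) (Fin.cons i (Fin.cons j c)) :)
    have hsymT : ∀ c, (Matrix.toEuclideanLin (M c)).IsSymmetric :=
      fun c => Matrix.isHermitian_iff_isSymmetric.mp (hsym c)
    have hmulT : ∀ (P Q : Matrix (Fin n) (Fin n) ℝ),
        Matrix.toEuclideanLin P * Matrix.toEuclideanLin Q = Matrix.toEuclideanLin (P * Q) := by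
      intro P Q
      refine LinearMap.ext fun x => ?_
      show Matrix.toEuclideanLin P (Matrix.toEuclideanLin Q x) = _
      simp [Matrix.toEuclideanLin_apply, Matrix.mulVec_mulVec]
    have hcommT : Pairwise (Function.onFun Commute fun c => Matrix.toEuclideanLin (M c)) := by
      intro c c' _
      simp only [Function.onFun, Commute, SemiconjBy, hmulT]
      rw [hcomm c c']
    set V : ((Fin e → Fin n) → ℝ) → Submodule ℝ (EuclideanSpace ℝ (Fin n)) :=
      fun ch => ⨅ c, Module.End.eigenspace (Matrix.toEuclideanLin (M c)) (ch c) with hVdef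
    have hOrtho : OrthogonalFamily ℝ (fun ch => (V ch : Submodule ℝ _))
        (fun ch => (V ch).subtypeₗᵢ) :=
      LinearMap.IsSymmetric.orthogonalFamily_iInf_eigenspaces hsymT
    have hInternal0 : DirectSum.IsInternal V :=
      LinearMap.IsSymmetric.LinearMap.IsSymmetric.directSum_isInternal_of_pairwise_commute
        hsymT hcommT
    obtain ⟨hIndep, hTop⟩ :=
      (DirectSum.isInternal_submodule_iff_iSupIndep_and_iSup_eq_top V).mp hInternal0
    have hfin : Set.Finite {ch | V ch ≠ ⊥} := WellFoundedGT.finite_ne_bot_of_iSupIndep hIndep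
    haveI : Fintype {ch | V ch ≠ ⊥} := hfin.fintype
    have hInternal : DirectSum.IsInternal (fun s : {ch | V ch ≠ ⊥} => V s.1) := by
      rw [DirectSum.isInternal_submodule_iff_iSupIndep_and_iSup_eq_top]
      refine ⟨hIndep.comp Subtype.coe_injective, ?_⟩
      rw [← hTop]
      apply le_antisymm
      · exact iSup_le fun s => le_iSup V s.1
      · refine iSup_le fun ch => ?_
        by_cases h : V ch = ⊥
        · rw [h]; exact bot_le
        · exact le_iSup (fun s : {ch | V ch ≠ ⊥} => V s.1) ⟨ch, h⟩
    have hOrtho' : OrthogonalFamily ℝ (fun s : {ch | V ch ≠ ⊥} => (V s.1 : Submodule ℝ _))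
        (fun s => (V s.1).subtypeₗᵢ) := hOrtho.comp Subtype.coe_injective
    have hn : Module.finrank ℝ (EuclideanSpace ℝ (Fin n)) = n := finrank_euclideanSpace_fin
    set b := hInternal.subordinateOrthonormalBasis hn hOrtho' with hb
    set χ := fun k => (hInternal.subordinateOrthonormalBasisIndex hn k hOrtho').1 with hχ
    have hbmem : ∀ k, b k ∈ ⨅ c, Module.End.eigenspace (Matrix.toEuclideanLin (M c)) (χ k c) :=
      fun k => hInternal.subordinateOrthonormalBasis_subordinate hn k hOrtho'
    set v : Fin n → Fin n → ℝ := fun k => (WithLp.equiv 2 (Fin n → ℝ)) (b k) with hvdef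
    have hv : ∀ k c, M c *ᵥ v k = χ k c • v k := by
      intro k c
      have hmem := (Submodule.mem_iInf _).mp (hbmem k) c
      rw [Module.End.mem_eigenspace_iff] at hmem
      calc M c *ᵥ v k = (WithLp.equiv 2 (Fin n → ℝ)) (Matrix.toEuclideanLin (M c) (b k)) := by
            rfl
        _ = χ k c • v k := by rw [hmem]; rfl
    have hinner : ∀ k l, ∑ i, v k i * v l i = if k = l then 1 else 0 := by
      intro k l
      have := (orthonormal_iff_ite.mp b.orthonormal) k l
      rw [← this]
      simp [PiLp.inner_apply, RCLike.inner_apply, starRingEnd_apply]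
      exact Finset.sum_congr rfl fun i _ => mul_comm _ _
    have hzero : ∀ (c : Fin e → Fin n) (k l : Fin n), k ≠ l →
        ∑ i, ∑ j, M c i j * v k i * v l j = 0 := by
      intro c k l hkl
      have h1 : ∑ i, ∑ j, M c i j * v k i * v l j = ∑ i, v k i * (M c *ᵥ v l) i := by
        refine Finset.sum_congr rfl fun i _ => ?_
        simp only [Matrix.mulVec, dotProduct, Finset.mul_sum]
        exact Finset.sum_congr rfl fun j _ => by ring
      rw [h1, hv l c]
      simp only [Pi.smul_apply, smul_eq_mul]
      rw [show ∑ i, v k i * (χ l c * v l i) = χ l c * ∑ i, v k i * v l i by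
        rw [Finset.mul_sum]; exact Finset.sum_congr rfl fun i _ => by ring]
      rw [hinner k l, if_neg hkl, mul_zero]
    refine ⟨Matrix.of (fun i k => v k i), ?_, ?_⟩
    · ext k l
      simp only [mul_apply, transpose_apply, of_apply, one_apply]
      rw [← hinner k l]
    · intro jdx hjdx
      push_neg at hjdx
      obtain ⟨s, s', hss⟩ := hjdx
      have hsne : s ≠ s' := fun hh => hss (by rw [hh])
      obtain ⟨σ, hσ0, hσ1⟩ := exists_perm hsne
      simp only [of_apply]
      have hperm : (∑ idx : Fin (e+2) → Fin n, A idx * ∏ t, v (jdx (σ t)) (idx t))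
          = ∑ idx : Fin (e+2) → Fin n, A idx * ∏ t, v (jdx t) (idx t) := by
        refine Fintype.sum_bijective (fun idx => idx ∘ σ.symm) ?_ _ _ fun idx => ?_
        · rw [Function.bijective_iff_has_inverse]
          exact ⟨fun idx => idx ∘ σ,
            fun idx => funext fun t => by simp,
            fun idx => funext fun t => by simp⟩
        · show A idx * ∏ t, v (jdx (σ t)) (idx t)
              = A (idx ∘ ⇑σ.symm) * ∏ t, v (jdx t) ((idx ∘ ⇑σ.symm) t)
          rw [hA σ.symm idx]
          congr 1
          rw [← Equiv.prod_comp σ (fun t => v (jdx t) ((idx ∘ ⇑σ.symm) t))]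
          exact Finset.prod_congr rfl fun t _ => by simp
      rw [← hperm]
      -- now jdx∘σ has distinct values at 0 and 1
      have hw : jdx (σ 0) ≠ jdx (σ 1) := by rw [hσ0, hσ1]; exact hss
      set w : Fin (e+2) → Fin n := fun t => jdx (σ t) with hwdef
      have hstep : ∀ (i j : Fin n) (c : Fin e → Fin n),
          A (Fin.cons i (Fin.cons j c)) * ∏ t, v (w t) ((Fin.cons i (Fin.cons j c) : Fin (e+2) → Fin n) t)
            = (M c i j * v (w 0) i * v (w 1) j) * ∏ t : Fin e, v (w t.succ.succ) (c t) := by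
        intro i j c
        rw [Fin.prod_univ_succ, Fin.prod_univ_succ]
        simp only [Fin.cons_succ, Fin.cons_zero]
        simp only [Fin.succ_zero_eq_one, hM, of_apply]
        ring
      calc ∑ idx : Fin (e+2) → Fin n, A idx * ∏ t, v (w t) (idx t)
          = ∑ i, ∑ j, ∑ c : Fin e → Fin n,
              (M c i j * v (w 0) i * v (w 1) j) * ∏ t : Fin e, v (w t.succ.succ) (c t) := by
            rw [sum_pi_split (fun idx => A idx * ∏ t, v (w t) (idx t))]
            refine Finset.sum_congr rfl fun i _ => ?_
            rw [sum_pi_split (fun c1 => A (Fin.cons i c1) * ∏ t, v (w t) ((Fin.cons i c1 : Fin (e+2) → Fin n) t))]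
            exact Finset.sum_congr rfl fun j _ => Finset.sum_congr rfl fun c _ => hstep i j c
        _ = ∑ c : Fin e → Fin n, ∑ i, ∑ j,
              (M c i j * v (w 0) i * v (w 1) j) * ∏ t : Fin e, v (w t.succ.succ) (c t) := by
            rw [show (∑ i, ∑ j, ∑ c : Fin e → Fin n,
                (M c i j * v (w 0) i * v (w 1) j) * ∏ t : Fin e, v (w t.succ.succ) (c t))
                = ∑ i, ∑ c : Fin e → Fin n, ∑ j,
                (M c i j * v (w 0) i * v (w 1) j) * ∏ t : Fin e, v (w t.succ.succ) (c t) from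
              Finset.sum_congr rfl fun i _ => Finset.sum_comm]
            exact Finset.sum_comm
        _ = ∑ c : Fin e → Fin n,
              (∑ i, ∑ j, M c i j * v (w 0) i * v (w 1) j) * ∏ t : Fin e, v (w t.succ.succ) (c t) := by
            refine Finset.sum_congr rfl fun c _ => ?_
            rw [Finset.sum_mul]
            exact Finset.sum_congr rfl fun i _ => by rw [Finset.sum_mul]
        _ = 0 := by
            refine Finset.sum_eq_zero fun c _ => ?_
            rw [hzero c (w 0) (w 1) hw, zero_mul]
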